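/- Fix X ∈ 𝒜′ and let 𝐀 be a block matrix all of whose entries lie in 𝒜. Then 𝐀𝐒_X = 𝐒_X𝐀 if and only if 𝐀 is block Toeplitz, say A_{i,j} = M_{i−j} for d×d matrices M_{−(n−1)},…,M_{n−1}, with M_{k−n} = M_k X for every 1 ≤ k ≤ n−1. -/

import Mathlib

open Matrix BigOperators

noncomputable section

/-- A block entry: a `d × d` complex matrix. -/
abbrev Blk (d : ℕ) := Matrix (Fin d) (Fin d) ℂ

/-- An `n × n` block matrix with `d × d` complex matrix entries. -/
abbrev BlkMat (n d : ℕ) := Matrix (Fin n) (Fin n) (Blk d)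

/-- A block column vector: an `n × 1` column of `d × d` complex matrices. -/
abbrev BlkVec (n d : ℕ) := Fin n → Blk d

/-- The block shift `𝐒`: identity blocks on the subdiagonal, zero elsewhere. -/
def Smat (n d : ℕ) : BlkMat n d :=
  Matrix.of fun i j => if (i : ℕ) = (j : ℕ) + 1 then (1 : Blk d) else 0

/-- `𝐒_X`: identity blocks on the subdiagonal, `X` in the corner entry `(1, n)`
(zero-based `(0, n-1)`), zero elsewhere. -/
def SX (n d : ℕ) (X : Blk d) : BlkMat n d :=
  Matrix.of fun i j =>
    if (i : ℕ) = (j : ℕ) + 1 then (1 : Blk d)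
    else if (i : ℕ) = 0 ∧ (j : ℕ) = n - 1 then X else 0

/-- A block matrix is block Toeplitz when entries depend only on the difference of indices. -/
def IsBlockToeplitz {n d : ℕ} (A : BlkMat n d) : Prop :=
  ∀ i j i' j' : Fin n, (i : ℤ) - (j : ℤ) = (i' : ℤ) - (j' : ℤ) → A i j = A i' j'

/-- `T(A, Ω)`: the block Toeplitz matrix with zero diagonal whose `(i,j)` entry is
`A_{i-j}` for `i > j` and `(Ω_{j-i})ᴴ` for `i < j`. -/
def Tmat {n d : ℕ} (A Ω : BlkVec n d) : BlkMat n d :=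
  Matrix.of fun i j =>
    if (j : ℕ) < (i : ℕ) then
      A ⟨(i : ℕ) - (j : ℕ), (Nat.sub_le _ _).trans_lt i.isLt⟩
    else if (i : ℕ) < (j : ℕ) then
      (Ω ⟨(j : ℕ) - (i : ℕ), (Nat.sub_le _ _).trans_lt j.isLt⟩)ᴴ
    else 0

/-- `Ã`: the block column vector with `Ã_0 = 0` and `Ã_k = (A_{n-k})ᴴ` for `1 ≤ k ≤ n-1`. -/
def tilde {n d : ℕ} (A : BlkVec n d) : BlkVec n d :=
  fun k =>
    if h : (k : ℕ) = 0 then 0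
    else (A ⟨n - (k : ℕ),
      Nat.sub_lt ((Nat.zero_le _).trans_lt k.isLt) (Nat.pos_of_ne_zero h)⟩)ᴴ

/-- `U V*`: the `n × n` block matrix with `(i,j)` entry `U_i (V_j)ᴴ`. -/
def outer {n d : ℕ} (U V : BlkVec n d) : BlkMat n d :=
  Matrix.of fun i j => U i * (V j)ᴴ

/-- `v P₀`: the block matrix whose first block column is `v` and all other entries `0`. -/
def colTimesP0 {n d : ℕ} (v : BlkVec n d) : BlkMat n d :=
  Matrix.of fun i j => if (j : ℕ) = 0 then v i else 0

/-- `P₀* w`: the block matrix whose first block row is `w` and all other entries `0`. -/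
def P0starRow {n d : ℕ} (w : BlkVec n d) : BlkMat n d :=
  Matrix.of fun i j => if (i : ℕ) = 0 then w j else 0

/-- The block column vector with `M` in its first entry and `0` elsewhere. -/
def e0 {n d : ℕ} (M : Blk d) : BlkVec n d :=
  fun i => if (i : ℕ) = 0 then M else 0

lemma AS_apply {n d : ℕ} (hn : 0 < n) (X : Blk d) (A : BlkMat n d) (i j : Fin n) :
    (A * SX n d X) i j =
      if h : (j : ℕ) + 1 < n then A i ⟨(j : ℕ) + 1, h⟩ else A i ⟨0, hn⟩ * X := by
  rw [Matrix.mul_apply]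
  split_ifs with h
  · rw [Finset.sum_eq_single (⟨(j : ℕ) + 1, h⟩ : Fin n)]
    · simp [SX]
    · intro k _ hk
      have h1 : (k : ℕ) ≠ (j : ℕ) + 1 := fun hc => hk (Fin.ext hc)
      have h2 : (j : ℕ) ≠ n - 1 := by have := j.isLt; omega
      simp [SX, h1, h2]
    · simp
  · rw [Finset.sum_eq_single (⟨0, hn⟩ : Fin n)]
    · have hj : (j : ℕ) = n - 1 := by have := j.isLt; omega
      simp [SX, hj, hn.ne']
    · intro k _ hk
      have h1 : (k : ℕ) ≠ (j : ℕ) + 1 := by have := k.isLt; have := j.isLt; omega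
      have h2 : (k : ℕ) ≠ 0 := fun hc => hk (Fin.ext hc)
      simp [SX, h1, h2]
    · simp

lemma SA_apply {n d : ℕ} (hn : 0 < n) (X : Blk d) (A : BlkMat n d) (i j : Fin n) :
    (SX n d X * A) i j =
      if h : 0 < (i : ℕ) then A ⟨(i : ℕ) - 1, by have := i.isLt; omega⟩ j
      else X * A ⟨n - 1, by omega⟩ j := by
  rw [Matrix.mul_apply]
  split_ifs with h
  · rw [Finset.sum_eq_single (⟨(i : ℕ) - 1, by have := i.isLt; omega⟩ : Fin n)]
    · have : (i : ℕ) = ((i : ℕ) - 1) + 1 := by omega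
      simp [SX, ← this]
    · intro k _ hk
      have h1 : (i : ℕ) ≠ (k : ℕ) + 1 := by
        intro hc
        exact hk (by apply Fin.ext; simp only [Fin.val_mk] <;> omega)
      have h2 : (i : ℕ) ≠ 0 := by omega
      simp [SX, h1, h2]
    · simp
  · rw [Finset.sum_eq_single (⟨n - 1, by omega⟩ : Fin n)]
    · have hi : (i : ℕ) = 0 := by omega
      have : ¬ (i : ℕ) = (n - 1) + 1 := by omega
      simp [SX, hi, this]
    · intro k _ hk
      have h1 : (i : ℕ) ≠ (k : ℕ) + 1 := by omega
      have h2 : (k : ℕ) ≠ n - 1 := fun hc => hk (Fin.ext hc)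
      simp [SX, h1, h2]
    · simp

def Mdef {n d : ℕ} (hn : 0 < n) (A : BlkMat n d) : ℤ → Blk d := fun z =>
  if h : 0 ≤ z ∧ z < n then A ⟨z.toNat, by omega⟩ ⟨0, hn⟩
  else if h' : 0 < -z ∧ -z < n then A ⟨0, hn⟩ ⟨(-z).toNat, by omega⟩ else 0

lemma Mdef_of_nonneg {n d : ℕ} (hn : 0 < n) (A : BlkMat n d) (z : ℤ)
    (h0 : 0 ≤ z) (h1 : z < n) :
    Mdef hn A z = A ⟨z.toNat, by omega⟩ ⟨0, hn⟩ := dif_pos ⟨h0, h1⟩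

lemma Mdef_of_neg {n d : ℕ} (hn : 0 < n) (A : BlkMat n d) (z : ℤ)
    (h0 : z < 0) (h1 : -z < n) :
    Mdef hn A z = A ⟨0, hn⟩ ⟨(-z).toNat, by omega⟩ := by
  rw [Mdef, dif_neg (by omega), dif_pos ⟨by omega, h1⟩]


/-- `𝐀` with entries in `𝒜` commutes with `𝐒_X` iff `𝐀` is block Toeplitz, say
`A_{i,j} = M_{i-j}`, with `M_{k-n} = M_k X` for `1 ≤ k ≤ n-1`. -/
theorem commutes_with_SX_iff (n d : ℕ) (hn : 0 < n) (hd : 0 < d)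
    (𝒜 : Subalgebra ℂ (Blk d)) (hcomm : ∀ a ∈ 𝒜, ∀ b ∈ 𝒜, a * b = b * a)
    (X : Blk d) (hX : ∀ a ∈ 𝒜, X * a = a * X)
    (A : BlkMat n d) (hAmem : ∀ i j, A i j ∈ 𝒜) :
    A * SX n d X = SX n d X * A ↔
      ∃ M : ℤ → Blk d,
        (∀ i j : Fin n, A i j = M ((i : ℤ) - (j : ℤ))) ∧
        (∀ k : ℕ, 1 ≤ k → k ≤ n - 1 → M ((k : ℤ) - (n : ℤ)) = M (k : ℤ) * X) := by
  constructor
  · intro hcom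
    have E : ∀ i j : Fin n,
        (if h : (j : ℕ) + 1 < n then A i ⟨(j : ℕ) + 1, h⟩ else A i ⟨0, hn⟩ * X) =
        (if h : 0 < (i : ℕ) then A ⟨(i : ℕ) - 1, by have := i.isLt; omega⟩ j
          else X * A ⟨n - 1, by omega⟩ j) := by
      intro i j
      rw [← AS_apply hn, ← SA_apply hn, hcom]
    have step : ∀ (a b : ℕ) (ha : a + 1 < n) (hb : b + 1 < n),
        A ⟨a + 1, ha⟩ ⟨b + 1, hb⟩ = A ⟨a, by omega⟩ ⟨b, by omega⟩ := by
      intro a b ha hb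
      have := E ⟨a + 1, ha⟩ ⟨b, by omega⟩
      rw [dif_pos (by simpa using hb), dif_pos (by simp)] at this
      convert this using 2 <;> apply Fin.ext <;> simp only [Fin.val_mk] <;> omega
    have hT : ∀ (m a b : ℕ) (ha : a + m < n) (hb : b + m < n),
        A ⟨a + m, ha⟩ ⟨b + m, hb⟩ = A ⟨a, by omega⟩ ⟨b, by omega⟩ := by
      intro m
      induction m with
      | zero => intro a b ha hb; rfl
      | succ m ih =>
        intro a b ha hb
        have h1 : A ⟨a + (m + 1), ha⟩ ⟨b + (m + 1), hb⟩
            = A ⟨(a + m) + 1, by omega⟩ ⟨(b + m) + 1, by omega⟩ :=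
          congr_arg₂ A (Fin.ext (by simp only [Fin.val_mk] <;> omega))
            (Fin.ext (by simp only [Fin.val_mk] <;> omega))
        rw [h1, step _ _ (by omega) (by omega), ih a b (by omega) (by omega)]
    have hA : ∀ i j : Fin n, A i j = Mdef hn A ((i : ℤ) - (j : ℤ)) := by
      intro i j
      have hi := i.isLt
      have hj := j.isLt
      rcases le_or_gt (j : ℕ) (i : ℕ) with hle | hlt
      · rw [Mdef_of_nonneg hn A _ (by omega) (by omega)]
        calc A i j
            = A ⟨(i : ℕ) - (j : ℕ) + (j : ℕ), by omega⟩ ⟨0 + (j : ℕ), by omega⟩ :=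
              congr_arg₂ A (Fin.ext (by simp only [Fin.val_mk] <;> omega))
                (Fin.ext (by simp only [Fin.val_mk] <;> omega))
          _ = A ⟨(i : ℕ) - (j : ℕ), by omega⟩ ⟨0, by omega⟩ := hT _ _ _ _ _
          _ = A ⟨((i : ℤ) - (j : ℤ)).toNat, by omega⟩ ⟨0, hn⟩ :=
              congr_arg₂ A (Fin.ext (by simp only [Fin.val_mk] <;> omega))
                (Fin.ext (by simp only [Fin.val_mk] <;> omega))
      · rw [Mdef_of_neg hn A _ (by omega) (by omega)]
        calc A i j
            = A ⟨0 + (i : ℕ), by omega⟩ ⟨(j : ℕ) - (i : ℕ) + (i : ℕ), by omega⟩ :=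
              congr_arg₂ A (Fin.ext (by simp only [Fin.val_mk] <;> omega))
                (Fin.ext (by simp only [Fin.val_mk] <;> omega))
          _ = A ⟨0, by omega⟩ ⟨(j : ℕ) - (i : ℕ), by omega⟩ := hT _ _ _ _ _
          _ = A ⟨0, hn⟩ ⟨(-((i : ℤ) - (j : ℤ))).toNat, by omega⟩ :=
              congr_arg₂ A (Fin.ext (by simp only [Fin.val_mk] <;> omega))
                (Fin.ext (by simp only [Fin.val_mk] <;> omega))
    refine ⟨Mdef hn A, hA, ?_⟩
    intro k hk1 hk2
    have hn2 : 2 ≤ n := by omega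
    have hkn : k < n := by omega
    have hE := E ⟨k, hkn⟩ ⟨n - 1, by omega⟩
    rw [dif_neg (by simp only [Fin.val_mk] <;> omega), dif_pos (by show 0 < k; omega)] at hE
    have hE' : A ⟨k, hkn⟩ ⟨0, hn⟩ * X = A ⟨k - 1, by omega⟩ ⟨n - 1, by omega⟩ :=
      hE.trans (congr_arg₂ A (Fin.ext (by simp only [Fin.val_mk] <;> omega))
        (Fin.ext (by simp only [Fin.val_mk] <;> omega)))
    have g1 : Mdef hn A ((k : ℤ) - (n : ℤ)) = A ⟨k - 1, by omega⟩ ⟨n - 1, by omega⟩ := by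
      rw [hA ⟨k - 1, by omega⟩ ⟨n - 1, by omega⟩]
      exact congrArg (Mdef hn A) (by simp only [Fin.val_mk] <;> omega)
    have g2 : Mdef hn A (k : ℤ) = A ⟨k, hkn⟩ ⟨0, hn⟩ := by
      rw [hA ⟨k, hkn⟩ ⟨0, hn⟩]
      exact congrArg (Mdef hn A) (by simp only [Fin.val_mk] <;> omega)
    rw [g1, g2]
    exact hE'.symm
  · rintro ⟨M, hA, hMX⟩
    apply Matrix.ext
    intro i j
    rw [AS_apply hn, SA_apply hn]
    have hi := i.isLt
    have hj := j.isLt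
    split_ifs with h1 h2 h2
    · rw [hA, hA]
      exact congrArg M (by simp only [Fin.val_mk] <;> omega)
    · rw [hX _ (hAmem _ _), hA, hA]
      have hk := hMX (n - 1 - (j : ℕ)) (by omega) (by omega)
      have e1 : ((i : ℕ) : ℤ) - (((⟨(j : ℕ) + 1, h1⟩ : Fin n) : ℕ) : ℤ)
          = ((n - 1 - (j : ℕ) : ℕ) : ℤ) - (n : ℤ) := by
        simp only [Fin.val_mk] <;> omega
      have e2 : (((⟨n - 1, by omega⟩ : Fin n) : ℕ) : ℤ) - ((j : ℕ) : ℤ)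
          = ((n - 1 - (j : ℕ) : ℕ) : ℤ) := by
        simp only [Fin.val_mk] <;> omega
      rw [e1, e2, hk]
    · rw [hA, hA]
      have hk := hMX (i : ℕ) (by omega) (by omega)
      have e1 : (((⟨(i : ℕ) - 1, by omega⟩ : Fin n) : ℕ) : ℤ) - ((j : ℕ) : ℤ)
          = ((i : ℕ) : ℤ) - (n : ℤ) := by
        simp only [Fin.val_mk] <;> omega
      have e2 : ((i : ℕ) : ℤ) - (((⟨0, hn⟩ : Fin n) : ℕ) : ℤ) = ((i : ℕ) : ℤ) := by
        simp only [Fin.val_mk] <;> omega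
      rw [e1, e2, hk]
    · rw [hX _ (hAmem _ _), hA, hA]
      exact congrArg (fun z => M z * X) (by simp only [Fin.val_mk] <;> omega)
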